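/- Substituting a1 = 0 into γ_0 yields ∏_{c∈F_q}(a2 + c²·a0) = a2·((−a2)^{(q−1)/2} − a0^{(q−1)/2})² in the polynomial ring F[a0, a2]. -/

import Mathlib

open MvPolynomial

lemma prod_sub_eq_pow_card (Fq : Type*) [Field Fq] [Fintype Fq] {K : Type*} [CommRing K]
    (ψ : Fq →+* K) (v : K) :
    ∏ c : Fq, (v - ψ c) = v ^ Fintype.card Fq - v := by
  classical
  have h1 : 1 < Fintype.card Fq := Fintype.one_lt_card
  have hmonic : (Polynomial.X ^ Fintype.card Fq - Polynomial.X : Polynomial Fq).Monic :=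
    Polynomial.monic_X_pow_sub (by rw [Polynomial.degree_X]; exact_mod_cast h1)
  have hroots := FiniteField.roots_X_pow_card_sub_X Fq
  have hdeg := FiniteField.X_pow_card_sub_X_natDegree_eq Fq h1
  have hfact : (Finset.univ.val.map fun a => Polynomial.X - Polynomial.C a).prod =
      (Polynomial.X ^ Fintype.card Fq - Polynomial.X : Polynomial Fq) := by
    rw [← hroots]
    exact Polynomial.prod_multiset_X_sub_C_of_monic_of_roots_card_eq hmonic
      (by rw [hroots, hdeg]; simp [Finset.card_univ])
  have hfin : (∏ c : Fq, (Polynomial.X - Polynomial.C c)) =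
      (Polynomial.X ^ Fintype.card Fq - Polynomial.X : Polynomial Fq) := by
    rw [Finset.prod]; exact hfact
  have := congrArg (Polynomial.eval₂ ψ v) hfin
  simpa [Polynomial.eval₂_finset_prod] using this


/-- Substituting `a1 = 0` into `γ₀` gives, in `F[a0, a2]` (with `a0 = X 0`, `a2 = X 1`):
`∏_{c∈F_q}(a2 + c²·a0) = a2·((−a2)^((q−1)/2) − a0^((q−1)/2))²`. -/
theorem gamma_zero_at_a1_eq_zero (F : Type*) [Field F] (p n q : ℕ) (hp : p.Prime) (hp2 : p ≠ 2)
    [CharP F p] (hn : n ≠ 0) (hq : q = p ^ n)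
    (Fq : Type*) [Field Fq] [Fintype Fq] [Algebra Fq F] (hcard : Fintype.card Fq = q) :
    (∏ c : Fq, (X 1 + C ((algebraMap Fq F c) ^ 2) * X 0) : MvPolynomial (Fin 2) F) =
      X 1 * ((-X 1) ^ ((q - 1) / 2) - X 0 ^ ((q - 1) / 2)) ^ 2 := by
  classical
  have hq1 : 1 < q := by
    rw [hq]; exact Nat.one_lt_pow hn hp.one_lt
  have hqodd : Odd q := by
    rw [hq]; exact (hp.odd_of_ne_two hp2).pow
  set m := (q - 1) / 2 with hmdef
  have hm : 2 * m + 1 = q := by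
    obtain ⟨k, hk⟩ := hqodd
    omega
  have hm1 : 1 ≤ m := by omega
  let K := AlgebraicClosure F
  have hinj : Function.Injective
      (MvPolynomial.map (σ := Fin 2) (algebraMap F K)) :=
    MvPolynomial.map_injective _ (algebraMap F K).injective
  apply hinj
  apply MvPolynomial.funext
  intro g
  set ψ : Fq →+* K := (algebraMap F K).comp (algebraMap Fq F) with hψ
  set x := g 0 with hx
  set y := g 1 with hy
  have key : ∀ v : K, ∏ c : Fq, (v - ψ c) = v ^ q - v := by
    intro v
    rw [prod_sub_eq_pow_card Fq ψ v, hcard]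
  letI : CommRing K := Field.toCommRing
  have main : ∏ c : Fq, (y + (ψ c) ^ 2 * x) = y * ((-y) ^ m - x ^ m) ^ 2 := by
    rcases eq_or_ne x 0 with hx0 | hx0
    · simp only [hx0, mul_zero, add_zero, Finset.prod_const, Finset.card_univ, hcard,
        zero_pow (by omega : m ≠ 0)]
      rw [sub_zero, ← pow_mul, ← hm]
      have he : ((-1 : K)) ^ (m * 2) = 1 := Even.neg_one_pow ⟨m, by ring⟩
      ring_nf
      rw [he, mul_one]
    · obtain ⟨w, hw⟩ := IsAlgClosed.exists_pow_nat_eq (k := K) (-y * x⁻¹) (n := 2) two_pos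
      have hyw : y = -(x * w ^ 2) := by
        rw [hw, neg_mul, mul_neg, neg_neg, mul_comm y, ← mul_assoc, mul_inv_cancel₀ hx0, one_mul]
      have h1 : ∏ c : Fq, (y + (ψ c) ^ 2 * x) =
          x ^ q * ((∏ c : Fq, (ψ c - w)) * (∏ c : Fq, (ψ c + w))) := by
        have hxq : (x : K) ^ q = ∏ _c : Fq, x := by
          rw [Finset.prod_const, Finset.card_univ, hcard]
        rw [hxq, ← Finset.prod_mul_distrib, ← Finset.prod_mul_distrib]
        refine Finset.prod_congr rfl fun c _ => ?_
        rw [hyw]; ring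
      have h2 : ∏ c : Fq, (ψ c - w) = -(w ^ q - w) := by
        calc ∏ c : Fq, (ψ c - w) = ∏ c : Fq, -(w - ψ c) := by
              refine Finset.prod_congr rfl fun c _ => by ring
          _ = (∏ _c : Fq, (-1 : K)) * ∏ c : Fq, (w - ψ c) := by
              rw [← Finset.prod_mul_distrib]
              refine Finset.prod_congr rfl fun c _ => by ring
          _ = (-1) ^ Fintype.card Fq * ∏ c : Fq, (w - ψ c) := by
              rw [Finset.prod_const, Finset.card_univ]
          _ = -(w ^ q - w) := by
              rw [key, hcard, (hqodd.neg_one_pow), neg_one_mul]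
      have h3 : ∏ c : Fq, (ψ c + w) = w ^ q - w := by
        calc ∏ c : Fq, (ψ c + w) = ∏ c : Fq, -(-w - ψ c) := by
              refine Finset.prod_congr rfl fun c _ => by ring
          _ = (∏ _c : Fq, (-1 : K)) * ∏ c : Fq, (-w - ψ c) := by
              rw [← Finset.prod_mul_distrib]
              refine Finset.prod_congr rfl fun c _ => by ring
          _ = (-1) ^ Fintype.card Fq * ∏ c : Fq, (-w - ψ c) := by
              rw [Finset.prod_const, Finset.card_univ]
          _ = w ^ q - w := by
              rw [key, hcard, hqodd.neg_one_pow, hqodd.neg_pow]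
              ring
      rw [h1, h2, h3, hyw, ← hm]
      ring
  -- now transfer the pointwise identity to the evaluation goal
  calc MvPolynomial.eval g ((MvPolynomial.map (algebraMap F K))
        (∏ c : Fq, (X 1 + C ((algebraMap Fq F c) ^ 2) * X 0) : MvPolynomial (Fin 2) F))
      = ∏ c : Fq, (y + (ψ c) ^ 2 * x) := by
        rw [map_prod, map_prod]
        refine Finset.prod_congr rfl fun c _ => ?_
        simp [hψ, hx, hy]
    _ = y * ((-y) ^ m - x ^ m) ^ 2 := main
    _ = _ := by simp [hx, hy]
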